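/- Let H be a complex Hilbert space and let V be a linear subspace of B(H) containing the identity operator id_H. Let k ≥ 1 and let T = (T_{ij}) be a k×k matrix with all entries T_{ij} ∈ V, regarded as a bounded operator on H^k. Then ‖T‖_{B(H^k)} = sup{‖(φ(T_{ij}))_{i,j}‖_{M_{kn}(ℂ)} : n ≥ 1, φ : V → M_n(ℂ) linear, completely contractive, and φ(id_H) = I_n}. -/

import Mathlib

set_option maxHeartbeats 1000000
set_option synthInstance.maxHeartbeats 400000


/-- The operator norm of a complex matrix, as a linear map on Euclidean space. -/
noncomputable def matOpNorm {m n : Type*} [Fintype m] [Fintype n] [DecidableEq n]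
    (M : Matrix m n ℂ) : ℝ :=
  ‖LinearMap.toContinuousLinearMap (Matrix.toEuclideanLin M)‖

/-- An `m × m` matrix of bounded operators on `H`, regarded as a bounded operator on `H^m`,
the `ℓ²`-direct sum of `m` copies of `H`. -/
noncomputable def opMatrixToOp {H : Type*} [NormedAddCommGroup H] [InnerProductSpace ℂ H]
    (m : ℕ) (A : Fin m → Fin m → (H →L[ℂ] H)) :
    (PiLp 2 fun _ : Fin m => H) →L[ℂ] (PiLp 2 fun _ : Fin m => H) :=
  ((PiLp.continuousLinearEquiv 2 ℂ (fun _ : Fin m => H)).symm :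
      (∀ _ : Fin m, H) →L[ℂ] PiLp 2 fun _ : Fin m => H) ∘L
    (ContinuousLinearMap.pi fun i : Fin m =>
      ∑ j : Fin m, A i j ∘L ContinuousLinearMap.proj j) ∘L
      ((PiLp.continuousLinearEquiv 2 ℂ (fun _ : Fin m => H)) :
        (PiLp 2 fun _ : Fin m => H) →L[ℂ] ∀ _ : Fin m, H)

/-- A linear map `φ` from a subspace `V` of `B(H)` to `M_n(ℂ)` is completely contractive if
all of its amplifications to matrices over `V` are contractive. -/
def IsCompletelyContractive {H : Type*} [NormedAddCommGroup H] [InnerProductSpace ℂ H]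
    {V : Submodule ℂ (H →L[ℂ] H)} {n : ℕ}
    (φ : V →ₗ[ℂ] Matrix (Fin n) (Fin n) ℂ) : Prop :=
  ∀ (m : ℕ) (A : Fin m → Fin m → V),
    matOpNorm (Matrix.of fun p q : Fin m × Fin n => φ (A p.1 q.1) p.2 q.2) ≤
      ‖opMatrixToOp m fun i j => (A i j : H →L[ℂ] H)‖

section Aux

local notation "⟪" x ", " y "⟫" => @inner ℂ _ _ x y

variable {H : Type*} [NormedAddCommGroup H] [InnerProductSpace ℂ H]

lemma opMatrixToOp_apply (m : ℕ) (A : Fin m → Fin m → (H →L[ℂ] H))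
    (ξ : PiLp 2 fun _ : Fin m => H) (i : Fin m) :
    opMatrixToOp m A ξ i = ∑ j, A i j (ξ j) := by
  simp [opMatrixToOp, ContinuousLinearMap.sum_apply]

lemma matOpNorm_le {m n : Type*} [Fintype m] [Fintype n] [DecidableEq n]
    (M : Matrix m n ℂ) {C : ℝ} (hC : 0 ≤ C)
    (h : ∀ x : EuclideanSpace ℂ n, ‖Matrix.toEuclideanLin M x‖ ≤ C * ‖x‖) :
    matOpNorm M ≤ C :=
  ContinuousLinearMap.opNorm_le_bound _ hC h

lemma le_matOpNorm {m n : Type*} [Fintype m] [Fintype n] [DecidableEq n]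
    (M : Matrix m n ℂ) (x : EuclideanSpace ℂ n) :
    ‖Matrix.toEuclideanLin M x‖ ≤ matOpNorm M * ‖x‖ :=
  (LinearMap.toContinuousLinearMap (Matrix.toEuclideanLin M)).le_opNorm x

lemma matOpNorm_nonneg {m n : Type*} [Fintype m] [Fintype n] [DecidableEq n]
    (M : Matrix m n ℂ) : 0 ≤ matOpNorm M := norm_nonneg _

lemma norm_sum_smul_sq {n : ℕ} {b : Fin n → H} (hb : Orthonormal ℂ b) (c : Fin n → ℂ) :
    ‖∑ q, c q • b q‖ ^ 2 = ∑ q, ‖c q‖ ^ 2 := by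
  have h1 : ⟪∑ q, c q • b q, ∑ q, c q • b q⟫ = ∑ q, (‖c q‖ : ℂ) ^ 2 := by
    rw [sum_inner]
    simp only [inner_smul_left, hb.inner_right_fintype]
    congr 1; ext q
    rw [Complex.conj_mul']
  rw [← @inner_self_eq_norm_sq ℂ, h1, map_sum]
  simp [← Complex.ofReal_pow]

/-- compression to an orthonormal family, as a linear map from B(H) to matrices -/
noncomputable def compressMap {n : ℕ} (b : Fin n → H) :
    (H →L[ℂ] H) →ₗ[ℂ] Matrix (Fin n) (Fin n) ℂ where
  toFun v := Matrix.of fun p q => ⟪b p, v (b q)⟫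
  map_add' v w := by ext p q; simp [inner_add_right]
  map_smul' c v := by ext p q; simp [inner_smul_right]

lemma compressMap_apply {n : ℕ} (b : Fin n → H) (v : H →L[ℂ] H) (p q : Fin n) :
    compressMap b v p q = ⟪b p, v (b q)⟫ := rfl

lemma compressMap_id {n : ℕ} {b : Fin n → H} (hb : Orthonormal ℂ b) :
    compressMap b (ContinuousLinearMap.id ℂ H) = 1 := by
  ext p q
  simp [compressMap, Matrix.one_apply, orthonormal_iff_ite.mp hb]

/-- Entrywise formula for the amplified compression matrix applied to a vector. -/
lemma compress_entry (m n : ℕ) (b : Fin n → H) (A : Fin m → Fin m → (H →L[ℂ] H))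
    (x : EuclideanSpace ℂ (Fin m × Fin n))
    (ξ : PiLp 2 fun _ : Fin m => H) (hξ : ∀ j, ξ j = ∑ q, x (j, q) • b q)
    (i : Fin m) (p : Fin n) :
    Matrix.toEuclideanLin (Matrix.of fun p q : Fin m × Fin n => ⟪b p.2, A p.1 q.1 (b q.2)⟫)
      x (i, p) = ⟪b p, opMatrixToOp m A ξ i⟫ := by
  rw [opMatrixToOp_apply, Matrix.toEuclideanLin_apply]
  show (Matrix.of fun p q : Fin m × Fin n => ⟪b p.2, A p.1 q.1 (b q.2)⟫).mulVec
      (fun pq => x pq) (i, p) = _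
  rw [Matrix.mulVec, dotProduct, Fintype.sum_prod_type]
  rw [inner_sum]
  congr 1; ext j
  rw [hξ j, map_sum, inner_sum]
  congr 1; ext q
  simp [inner_smul_right, mul_comm]

/-- Compression to an orthonormal family is completely contractive. -/
lemma compress_cc {n : ℕ} {b : Fin n → H} (hb : Orthonormal ℂ b) (m : ℕ)
    (A : Fin m → Fin m → (H →L[ℂ] H)) :
    matOpNorm (Matrix.of fun p q : Fin m × Fin n => ⟪b p.2, A p.1 q.1 (b q.2)⟫) ≤
      ‖opMatrixToOp m A‖ := by
  refine matOpNorm_le _ (norm_nonneg (opMatrixToOp m A)) fun x => ?_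
  set ξ : PiLp 2 (fun _ : Fin m => H) := WithLp.toLp 2 (fun i => ∑ q, x (i, q) • b q) with hξdef
  have hξ : ∀ j, ξ j = ∑ q, x (j, q) • b q := fun j => rfl
  have hnx : ‖ξ‖ = ‖x‖ := by
    have h1 : ‖ξ‖ ^ 2 = ‖x‖ ^ 2 := by
      rw [PiLp.norm_sq_eq_of_L2, PiLp.norm_sq_eq_of_L2, Fintype.sum_prod_type]
      exact Finset.sum_congr rfl fun i _ => norm_sum_smul_sq hb _
    have := congrArg Real.sqrt h1
    rwa [Real.sqrt_sq (norm_nonneg _), Real.sqrt_sq (norm_nonneg _)] at this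
  have key : ‖Matrix.toEuclideanLin
      (Matrix.of fun p q : Fin m × Fin n => ⟪b p.2, A p.1 q.1 (b q.2)⟫) x‖ ^ 2 ≤
      ‖opMatrixToOp m A ξ‖ ^ 2 := by
    rw [PiLp.norm_sq_eq_of_L2, PiLp.norm_sq_eq_of_L2, Fintype.sum_prod_type]
    apply Finset.sum_le_sum
    intro i _
    calc ∑ p, ‖Matrix.toEuclideanLin
          (Matrix.of fun p q : Fin m × Fin n => ⟪b p.2, A p.1 q.1 (b q.2)⟫) x (i, p)‖ ^ 2
        = ∑ p, ‖⟪b p, opMatrixToOp m A ξ i⟫‖ ^ 2 := by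
          exact Finset.sum_congr rfl fun p _ => by rw [compress_entry m n b A x ξ hξ i p]
      _ ≤ ‖opMatrixToOp m A ξ i‖ ^ 2 := hb.sum_inner_products_le _
  have h2 : ‖opMatrixToOp m A ξ‖ ≤ ‖opMatrixToOp m A‖ * ‖x‖ := by
    rw [← hnx]; exact (opMatrixToOp m A).le_opNorm ξ
  have h3 : ‖Matrix.toEuclideanLin
      (Matrix.of fun p q : Fin m × Fin n => ⟪b p.2, A p.1 q.1 (b q.2)⟫) x‖ ^ 2 ≤
      (‖opMatrixToOp m A‖ * ‖x‖) ^ 2 := by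
    refine key.trans ?_
    have := pow_le_pow_left₀ (norm_nonneg _) h2 2
    exact this
  have h4 := Real.sqrt_le_sqrt h3
  rwa [Real.sqrt_sq (norm_nonneg _), Real.sqrt_sq (by positivity)] at h4

end Aux

theorem norm_opMatrix_eq_sSup_over_unital_completely_contractive_maps
    {H : Type*} [NormedAddCommGroup H] [InnerProductSpace ℂ H] [CompleteSpace H]
    (V : Submodule ℂ (H →L[ℂ] H)) (hid : ContinuousLinearMap.id ℂ H ∈ V)
    (k : ℕ) (hk : 1 ≤ k) (T : Fin k → Fin k → (H →L[ℂ] H))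
    (hT : ∀ i j, T i j ∈ V) :
    ‖opMatrixToOp k T‖ =
      sSup {r : ℝ | ∃ (n : ℕ) (φ : V →ₗ[ℂ] Matrix (Fin n) (Fin n) ℂ),
        1 ≤ n ∧ IsCompletelyContractive φ ∧
          φ ⟨ContinuousLinearMap.id ℂ H, hid⟩ = 1 ∧
          r = matOpNorm (Matrix.of fun p q : Fin k × Fin n =>
            φ ⟨T p.1 q.1, hT p.1 q.1⟩ p.2 q.2)} := by
  classical
  set S := {r : ℝ | ∃ (n : ℕ) (φ : V →ₗ[ℂ] Matrix (Fin n) (Fin n) ℂ),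
        1 ≤ n ∧ IsCompletelyContractive φ ∧
          φ ⟨ContinuousLinearMap.id ℂ H, hid⟩ = 1 ∧
          r = matOpNorm (Matrix.of fun p q : Fin k × Fin n =>
            φ ⟨T p.1 q.1, hT p.1 q.1⟩ p.2 q.2)} with hS
  have hub : ∀ r ∈ S, r ≤ ‖opMatrixToOp k T‖ := by
    rintro r ⟨n, φ, hn, hcc, hunit, rfl⟩
    have := hcc k (fun i j => ⟨T i j, hT i j⟩)
    simpa using this
  have hbdd : BddAbove S := ⟨_, hub⟩
  have hSnonneg : 0 ≤ sSup S := by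
    rcases Set.eq_empty_or_nonempty S with h | ⟨r, hr⟩
    · rw [h, Real.sSup_empty]
    · refine le_trans ?_ (le_csSup hbdd hr)
      obtain ⟨n, φ, hn, hcc, hunit, rfl⟩ := hr
      exact matOpNorm_nonneg _
  refine le_antisymm ?_ (Real.sSup_le hub (ContinuousLinearMap.opNorm_nonneg _))
  refine le_of_forall_lt fun c hc => ?_
  rcases lt_or_ge c 0 with hc0 | hc0
  · exact lt_of_lt_of_le hc0 hSnonneg
  -- c ≥ 0 and c < ‖opMatrixToOp k T‖ : find a witness
  obtain ⟨ξ, hξ1, hξ2⟩ := (opMatrixToOp k T).exists_lt_apply_of_lt_opNorm hc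
  have hξne : ξ ≠ 0 := by
    intro h
    rw [h, map_zero, norm_zero] at hξ2
    exact absurd hξ2 (not_lt.mpr hc0)
  set W := opMatrixToOp k T with hW
  set K : Submodule ℂ H :=
    Submodule.span ℂ (Set.range (fun j => ξ j) ∪ Set.range (fun i => W ξ i)) with hK
  have hfin : FiniteDimensional ℂ K :=
    FiniteDimensional.span_of_finite ℂ ((Set.finite_range _).union (Set.finite_range _))
  have hξK : ∀ j, ξ j ∈ K := fun j => Submodule.subset_span (Or.inl ⟨j, rfl⟩)
  have hWK : ∀ i, W ξ i ∈ K := fun i => Submodule.subset_span (Or.inr ⟨i, rfl⟩)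
  set n := Module.finrank ℂ K with hn
  set B := stdOrthonormalBasis ℂ K with hB
  set b : Fin n → H := fun q => (B q : H) with hb
  have hbo : Orthonormal ℂ b := B.orthonormal.comp_linearIsometry K.subtypeₗᵢ
  -- expansion of elements of K
  have hexp : ∀ v : H, v ∈ K → (∑ q, (inner ℂ (b q) v : ℂ) • b q) = v := by
    intro v hv
    have := congrArg (K.subtype) (B.sum_repr' ⟨v, hv⟩)
    simpa [map_sum, Submodule.coe_inner] using this
  have hnormK : ∀ v : H, v ∈ K → ∑ q, ‖(inner ℂ (b q) v : ℂ)‖ ^ 2 = ‖v‖ ^ 2 := by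
    intro v hv
    rw [← norm_sum_smul_sq hbo (fun q => (inner ℂ (b q) v : ℂ)), hexp v hv]
  have hn1 : 1 ≤ n := by
    obtain ⟨j, hj⟩ : ∃ j, ξ j ≠ 0 := by
      by_contra h'
      push_neg at h'
      apply hξne
      ext j
      exact h' j
    have hne : (⟨ξ j, hξK j⟩ : K) ≠ 0 := by
      intro h
      exact hj (congrArg Subtype.val h)
    have : Nontrivial K := nontrivial_of_ne _ _ hne
    have := Module.finrank_pos (R := ℂ) (M := K)
    omega
  set φ : V →ₗ[ℂ] Matrix (Fin n) (Fin n) ℂ := (compressMap b).comp V.subtype with hφ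
  have hφapply : ∀ (v : V) (p q : Fin n), φ v p q = (inner ℂ (b p) ((v : H →L[ℂ] H) (b q)) : ℂ) :=
    fun v p q => rfl
  have hcc : IsCompletelyContractive φ := by
    intro m A
    exact compress_cc hbo m fun i j => (A i j : H →L[ℂ] H)
  have hunit : φ ⟨ContinuousLinearMap.id ℂ H, hid⟩ = 1 := compressMap_id hbo
  set M : Matrix (Fin k × Fin n) (Fin k × Fin n) ℂ :=
    Matrix.of fun p q : Fin k × Fin n => φ ⟨T p.1 q.1, hT p.1 q.1⟩ p.2 q.2 with hM
  have hmem : matOpNorm M ∈ S := ⟨n, φ, hn1, hcc, hunit, rfl⟩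
  -- show c < matOpNorm M
  set x : EuclideanSpace ℂ (Fin k × Fin n) := WithLp.toLp 2 (fun jq : Fin k × Fin n => (inner ℂ (b jq.2) (ξ jq.1) : ℂ)) with hx
  have hξexp : ∀ j, ξ j = ∑ q, x (j, q) • b q := fun j => (hexp (ξ j) (hξK j)).symm
  have hMx : ∀ (i : Fin k) (p : Fin n),
      Matrix.toEuclideanLin M x (i, p) = (inner ℂ (b p) (W ξ i) : ℂ) := by
    intro i p
    have : M = Matrix.of fun p q : Fin k × Fin n =>
        (inner ℂ (b p.2) (T p.1 q.1 (b q.2)) : ℂ) := rfl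
    rw [this]
    exact compress_entry k n b T x ξ hξexp i p
  have hnormMx : ‖Matrix.toEuclideanLin M x‖ ^ 2 = ‖W ξ‖ ^ 2 := by
    rw [PiLp.norm_sq_eq_of_L2, PiLp.norm_sq_eq_of_L2, Fintype.sum_prod_type]
    refine Finset.sum_congr rfl fun i _ => ?_
    calc ∑ p, ‖Matrix.toEuclideanLin M x (i, p)‖ ^ 2
        = ∑ p, ‖(inner ℂ (b p) (W ξ i) : ℂ)‖ ^ 2 :=
          Finset.sum_congr rfl fun p _ => by rw [hMx i p]
      _ = ‖W ξ i‖ ^ 2 := hnormK _ (hWK i)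
  have hxle : ‖x‖ ≤ 1 := by
    have h1 : ‖x‖ ^ 2 ≤ ‖ξ‖ ^ 2 := by
      rw [PiLp.norm_sq_eq_of_L2, PiLp.norm_sq_eq_of_L2, Fintype.sum_prod_type]
      refine Finset.sum_le_sum fun j _ => ?_
      exact hbo.sum_inner_products_le (ξ j)
    have h2 : ‖x‖ ^ 2 ≤ 1 := h1.trans (by nlinarith [norm_nonneg ξ, hξ1])
    nlinarith [norm_nonneg x]
  have hle : ‖W ξ‖ ≤ matOpNorm M := by
    have h1 : ‖Matrix.toEuclideanLin M x‖ = ‖W ξ‖ := by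
      have := congrArg Real.sqrt hnormMx
      rwa [Real.sqrt_sq (norm_nonneg _), Real.sqrt_sq (norm_nonneg _)] at this
    calc ‖W ξ‖ = ‖Matrix.toEuclideanLin M x‖ := h1.symm
      _ ≤ matOpNorm M * ‖x‖ := le_matOpNorm M x
      _ ≤ matOpNorm M * 1 := by
          exact mul_le_mul_of_nonneg_left hxle (matOpNorm_nonneg M)
      _ = matOpNorm M := mul_one _
  exact lt_of_lt_of_le (lt_of_lt_of_le hξ2 hle) (le_csSup hbdd hmem)
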